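/- arXiv:1209.6344 — 2 statements merged into one kernel-verified Lean document; each statement's English description precedes it below -/
import Mathlib

section
/- Let F : ℝ² → ℝ, let a_t, c_t > 0 and b_t, d_t ∈ ℝ be families of constants indexed by t ≥ 1, and let Φ₀ : ℝ² → ℝ satisfy Φ₀(0,0) > 0. Suppose that for every (x,y) ∈ ℝ², t·(1 − F(a_t x + b_t, c_t y + d_t)) → Φ₀(x,y) as t → ∞, and that 1 − F(b_t, d_t) > 0 for all large t. Then for every (x,y), the conditional exceedance distribution F_{b_t,d_t}(a_t x, c_t y) = (F(a_t x + b_t, c_t y + d_t) − F(b_t, d_t))/(1 − F(b_t, d_t)) converges, as t → ∞, to H(x,y) = 1 − Φ₀(x,y)/Φ₀(0,0). -/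
open Filter

/-- If `t (1 - F(a_t x + b_t, c_t y + d_t)) → Φ₀(x,y)` for all `(x,y)`, with
`Φ₀(0,0) > 0` and `1 - F(b_t, d_t) > 0` eventually, then the conditional exceedance
distribution `F_{b_t,d_t}(a_t x, c_t y)` converges to the bivariate generalized Pareto
limit `H(x,y) = 1 - Φ₀(x,y)/Φ₀(0,0)`. -/
theorem stmt_2 (F : ℝ → ℝ → ℝ) (a b c d : ℝ → ℝ)
    (ha : ∀ t, 0 < a t) (hc : ∀ t, 0 < c t)
    (Φ₀ : ℝ → ℝ → ℝ) (hΦ₀ : 0 < Φ₀ 0 0)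
    (hlim : ∀ x y : ℝ,
      Tendsto (fun t : ℝ => t * (1 - F (a t * x + b t) (c t * y + d t)))
        atTop (nhds (Φ₀ x y)))
    (hpos : ∀ᶠ t in atTop, 0 < 1 - F (b t) (d t)) :
    ∀ x y : ℝ,
      Tendsto (fun t : ℝ =>
          (F (b t + a t * x) (d t + c t * y) - F (b t) (d t)) / (1 - F (b t) (d t)))
        atTop (nhds (1 - Φ₀ x y / Φ₀ 0 0)) := by
  intro x y
  have h00 : Tendsto (fun t : ℝ => t * (1 - F (b t) (d t))) atTop (nhds (Φ₀ 0 0)) := by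
    have := hlim 0 0
    simpa using this
  have hdiv : Tendsto (fun t : ℝ =>
      (t * (1 - F (a t * x + b t) (c t * y + d t))) / (t * (1 - F (b t) (d t))))
      atTop (nhds (Φ₀ x y / Φ₀ 0 0)) :=
    (hlim x y).div h00 (ne_of_gt hΦ₀)
  have hmain : Tendsto (fun t : ℝ =>
      1 - (t * (1 - F (a t * x + b t) (c t * y + d t))) / (t * (1 - F (b t) (d t))))
      atTop (nhds (1 - Φ₀ x y / Φ₀ 0 0)) :=
    tendsto_const_nhds.sub hdiv
  refine hmain.congr' ?_
  filter_upwards [hpos, eventually_gt_atTop (0 : ℝ)] with t hp ht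
  have ht' : (t : ℝ) ≠ 0 := ne_of_gt ht
  have hp' : (1 - F (b t) (d t)) ≠ 0 := ne_of_gt hp
  rw [mul_div_mul_left _ _ ht']
  rw [show b t + a t * x = a t * x + b t by ring, show d t + c t * y = c t * y + d t by ring]
  field_simp
  ring
end

section
/- The Schlather bivariate distribution is max-stable: for every ρ ∈ [−1,1], every c > 0 and all y₁, y₂ > 0, V^S_ρ(c·y₁, c·y₂) = V^S_ρ(y₁,y₂)/c, and consequently (exp(−V^S_ρ(c·y₁, c·y₂)))^c = exp(−V^S_ρ(y₁,y₂)), where the left side uses the real power with exponent c. -/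
open Filter

/-- Schlather bivariate exponent. -/
noncomputable def schlatherV (ρ y₁ y₂ : ℝ) : ℝ :=
  (1 / 2) * (1 / y₁ + 1 / y₂) *
    (1 + Real.sqrt (1 - 2 * (ρ + 1) * y₁ * y₂ / (y₁ + y₂) ^ 2))

/-- The Schlather bivariate distribution is max-stable: the exponent is homogeneous
of order `-1` and consequently `(exp(-V(c y₁, c y₂)))^c = exp(-V(y₁, y₂))`. -/
theorem stmt_7 (ρ : ℝ) (hρ : ρ ∈ Set.Icc (-1 : ℝ) 1) (c : ℝ) (hc : 0 < c)
    (y₁ y₂ : ℝ) (hy₁ : 0 < y₁) (hy₂ : 0 < y₂) :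
    schlatherV ρ (c * y₁) (c * y₂) = schlatherV ρ y₁ y₂ / c
      ∧ Real.exp (-(schlatherV ρ (c * y₁) (c * y₂))) ^ c
          = Real.exp (-(schlatherV ρ y₁ y₂)) := by
  have hs : (c * y₁ + c * y₂) ^ 2 ≠ 0 := by positivity
  have hs' : (y₁ + y₂) ^ 2 ≠ 0 := by positivity
  have harg : 2 * (ρ + 1) * (c * y₁) * (c * y₂) / (c * y₁ + c * y₂) ^ 2
      = 2 * (ρ + 1) * y₁ * y₂ / (y₁ + y₂) ^ 2 := by
    field_simp
  have h1 : schlatherV ρ (c * y₁) (c * y₂) = schlatherV ρ y₁ y₂ / c := by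
    unfold schlatherV
    rw [harg]
    field_simp
  refine ⟨h1, ?_⟩
  rw [h1, ← Real.exp_mul]
  congr 1
  field_simp
end
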